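/- Let (P_n) and (Q_n) be sequences of probability measures on measurable spaces (X_n, B_n), and a_n ↓ 0. If for every ε > 0 there exists c > 0 such that ‖Q_n − Q_n ∧ c·a_n^{-1} P_n‖ < ε for all large enough n, then P_n[φ_n] = o(a_n) implies Q_n[φ_n] = o(1) for every sequence of measurable φ_n : X_n → [0,1]. -/

import Mathlib

open MeasureTheory Filter Asymptotics

/-- Lemma 3.2 (iv): the truncation (total-variation) criterion implies
`a n`-remote contiguity of `Q n` with respect to `P n`. -/
theorem stmt3
    {X : ℕ → Type*} [∀ n, MeasurableSpace (X n)]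
    (P Q : (n : ℕ) → Measure (X n))
    (hP : ∀ n, IsProbabilityMeasure (P n)) (hQ : ∀ n, IsProbabilityMeasure (Q n))
    (a : ℕ → ℝ) (ha0 : ∀ n, 0 < a n) (haanti : Antitone a)
    (halim : Tendsto a atTop (nhds 0))
    (hcrit : ∀ ε > (0:ℝ), ∃ c > (0:ℝ), ∀ᶠ n in atTop,
      ((Q n - (Q n ⊓ (ENNReal.ofReal (c * (a n)⁻¹) • P n))) Set.univ).toReal < ε)
    (φ : (n : ℕ) → X n → ℝ) (hmeas : ∀ n, Measurable (φ n))
    (h01 : ∀ n x, 0 ≤ φ n x ∧ φ n x ≤ 1)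
    (ho : (fun n => ∫ x, φ n x ∂(P n)) =o[atTop] a) :
    Tendsto (fun n => ∫ x, φ n x ∂(Q n)) atTop (nhds 0) := by
  haveI := hP; haveI := hQ
  have hIle : ∀ n (μ : Measure (X n)),
      ∫⁻ x, ENNReal.ofReal (φ n x) ∂μ ≤ μ Set.univ := by
    intro n μ
    calc ∫⁻ x, ENNReal.ofReal (φ n x) ∂μ ≤ ∫⁻ _, 1 ∂μ :=
          lintegral_mono fun x => ENNReal.ofReal_le_one.mpr (h01 n x).2
      _ = μ Set.univ := lintegral_one
  have hInt : ∀ n (μ : Measure (X n)),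
      ∫ x, φ n x ∂μ = (∫⁻ x, ENNReal.ofReal (φ n x) ∂μ).toReal := fun n μ =>
    integral_eq_lintegral_of_nonneg_ae (Eventually.of_forall fun x => (h01 n x).1)
      (hmeas n).aestronglyMeasurable
  rw [Metric.tendsto_atTop]
  intro ε hε
  obtain ⟨c, hc, hev⟩ := hcrit (ε / 2) (by positivity)
  have ho' := ho.def (show (0:ℝ) < ε / (2 * c) by positivity)
  obtain ⟨N, hN⟩ := eventually_atTop.mp (hev.and ho')
  refine ⟨N, fun n hn => ?_⟩
  obtain ⟨hA, hB⟩ := hN n hn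
  set ν : Measure (X n) := ENNReal.ofReal (c * (a n)⁻¹) • P n with hν
  haveI : IsFiniteMeasure ν := by
    constructor
    rw [hν]
    simp [Measure.smul_apply]
  haveI : IsFiniteMeasure (Q n ⊓ ν) := isFiniteMeasure_of_le (Q n) inf_le_left
  have hsplit : (Q n - Q n ⊓ ν) + (Q n ⊓ ν) = Q n :=
    Measure.sub_add_cancel_of_le inf_le_left
  -- ENNReal inequality
  have hEN : ∫⁻ x, ENNReal.ofReal (φ n x) ∂(Q n)
      ≤ (Q n - Q n ⊓ ν) Set.univ + ENNReal.ofReal (c * (a n)⁻¹) *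
          ∫⁻ x, ENNReal.ofReal (φ n x) ∂(P n) := by
    conv_lhs => rw [← hsplit]
    rw [lintegral_add_measure]
    gcongr
    · exact hIle n _
    · calc ∫⁻ x, ENNReal.ofReal (φ n x) ∂(Q n ⊓ ν)
          ≤ ∫⁻ x, ENNReal.ofReal (φ n x) ∂ν :=
            lintegral_mono' inf_le_right le_rfl
        _ = _ := by rw [hν, lintegral_smul_measure, smul_eq_mul]
  have hAfin : (Q n - Q n ⊓ ν) Set.univ ≠ ⊤ :=
    (lt_of_le_of_lt (Measure.le_iff'.1 MeasureTheory.Measure.sub_le Set.univ) (measure_lt_top (Q n) _)).ne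
  have hPfin : ∫⁻ x, ENNReal.ofReal (φ n x) ∂(P n) ≠ ⊤ :=
    (lt_of_le_of_lt (hIle n (P n)) (measure_lt_top (P n) _)).ne
  have hBfin : ENNReal.ofReal (c * (a n)⁻¹) *
      ∫⁻ x, ENNReal.ofReal (φ n x) ∂(P n) ≠ ⊤ :=
    ENNReal.mul_ne_top ENNReal.ofReal_ne_top hPfin
  have hca : (0:ℝ) ≤ c * (a n)⁻¹ := mul_nonneg hc.le (inv_nonneg.2 (ha0 n).le)
  have key : ∫ x, φ n x ∂(Q n) ≤ ((Q n - Q n ⊓ ν) Set.univ).toReal +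
      (c * (a n)⁻¹) * ∫ x, φ n x ∂(P n) := by
    rw [hInt n (Q n), hInt n (P n)]
    calc (∫⁻ x, ENNReal.ofReal (φ n x) ∂(Q n)).toReal
        ≤ ((Q n - Q n ⊓ ν) Set.univ + ENNReal.ofReal (c * (a n)⁻¹) *
            ∫⁻ x, ENNReal.ofReal (φ n x) ∂(P n)).toReal :=
          ENNReal.toReal_mono (ENNReal.add_ne_top.mpr ⟨hAfin, hBfin⟩) hEN
      _ = _ := by
          rw [ENNReal.toReal_add hAfin hBfin, ENNReal.toReal_mul,
            ENNReal.toReal_ofReal hca]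
  have hQnn : 0 ≤ ∫ x, φ n x ∂(Q n) :=
    integral_nonneg fun x => (h01 n x).1
  have hPb : (c * (a n)⁻¹) * ∫ x, φ n x ∂(P n) ≤ ε / 2 := by
    have h1 : ∫ x, φ n x ∂(P n) ≤ ε / (2 * c) * a n := by
      calc ∫ x, φ n x ∂(P n) ≤ ‖∫ x, φ n x ∂(P n)‖ := le_abs_self _
        _ ≤ ε / (2 * c) * ‖a n‖ := hB
        _ = ε / (2 * c) * a n := by rw [Real.norm_eq_abs, abs_of_pos (ha0 n)]
    have h2 : (c * (a n)⁻¹) * (ε / (2 * c) * a n) = ε / 2 := by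
      have hane : a n ≠ 0 := (ha0 n).ne'
      have hcne : c ≠ 0 := hc.ne'
      field_simp
    calc (c * (a n)⁻¹) * ∫ x, φ n x ∂(P n)
        ≤ (c * (a n)⁻¹) * (ε / (2 * c) * a n) := by
          apply mul_le_mul_of_nonneg_left h1 hca
      _ = ε / 2 := h2
  rw [Real.dist_eq, sub_zero, abs_of_nonneg hQnn]
  calc ∫ x, φ n x ∂(Q n)
      ≤ ((Q n - Q n ⊓ ν) Set.univ).toReal + (c * (a n)⁻¹) * ∫ x, φ n x ∂(P n) := key
    _ < ε / 2 + ε / 2 := by exact add_lt_add_of_lt_of_le hA hPb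
    _ = ε := add_halves ε
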